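/- Let k ≥ 2, n = 4k, H the regular Cayley representation of Q_{4k} in Sym_n, and π : FM_n → S_n(H) the canonical projection from the free monoid on x_1,...,x_n. Suppose w_1 = x_{i_1}···x_{i_r} and w_2 = x_{j_1}···x_{j_r} satisfy π(w_1) = π(w_2) and i_1 ≠ j_1. Then r ≥ n, and there exist σ, τ ∈ H such that i_m = σ(m) and j_m = τ(m) for all 1 ≤ m ≤ n−1. Moreover exactly one of the following holds: (1) σ(n) = i_n and τ(n) = j_n; (2) σ(n) = i_n and τ(n) ≠ j_n; (3) σ(n) ≠ i_n and τ(n) = j_n. -/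

import Mathlib

/-- The position in `{1, ..., 4*k}` of an element of the generalized quaternion group
`Q_{4k}`, under the identification `t^i ↔ i+1` and `t^i * u ↔ i + 2k + 1`
(for `0 ≤ i ≤ 2k-1`), where `t = QuaternionGroup.a 1` and `u = QuaternionGroup.xa 0`.
Note `QuaternionGroup.xa j = u * t^j = t^(-j) * u`. -/
def qpos (k : ℕ) : QuaternionGroup k → ℕ
  | .a i => i.val + 1
  | .xa i => (-i).val + 2 * k + 1

/-- The element of `Q_{4k}` at position `p ∈ {1, ..., 4*k}`. -/
def qofpos (k : ℕ) (p : ℕ) : QuaternionGroup k :=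
  if p ≤ 2 * k then .a ((p - 1 : ℕ) : ZMod (2 * k))
  else .xa (-((p - 2 * k - 1 : ℕ) : ZMod (2 * k)))

/-- The Cayley (left regular) representation of `Q_{4k}` as permutations of the
positions `{1, ..., 4*k}`: the element at position `p` is sent, by `g`, to the
position of `g * (element at position p)`. -/
def qact (k : ℕ) (g : QuaternionGroup k) (p : ℕ) : ℕ :=
  qpos k (g * qofpos k p)

lemma qpos_bounds (k : ℕ) (hk : 2 ≤ k) (x : QuaternionGroup k) :
    1 ≤ qpos k x ∧ qpos k x ≤ 4 * k := by
  haveI : NeZero (2 * k) := ⟨by omega⟩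
  cases x with
  | a i => have := i.val_lt; simp only [qpos]; omega
  | xa i => have := (-i).val_lt; simp only [qpos]; omega

/-- The generator `x_{σ(p)}` (as an element of `Fin (4*k)`, `0`-indexed) of the free
monoid, where `σ` is the permutation of `{1, ..., 4*k}` given by `g ∈ H`. -/
def qletter (k : ℕ) (hk : 2 ≤ k) (g : QuaternionGroup k) (p : ℕ) : Fin (4 * k) :=
  ⟨qact k g p - 1, by
    have h := qpos_bounds k hk (g * qofpos k p)
    simp only [qact]; omega⟩

/-- The word `x_{σ(a)} x_{σ(a+1)} ⋯ x_{σ(a+len-1)}` in the free monoid on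
`x_1, ..., x_n` (letters indexed by `Fin (4*k)`, `0`-indexed). -/
def segWord (k : ℕ) (hk : 2 ≤ k) (g : QuaternionGroup k) (a len : ℕ) :
    FreeMonoid (Fin (4 * k)) :=
  FreeMonoid.ofList ((List.range' a len).map (qletter k hk g))

/-- The word `x_1 x_2 ⋯ x_n`. -/
def baseWord (k : ℕ) : FreeMonoid (Fin (4 * k)) :=
  FreeMonoid.ofList (List.ofFn (fun m : Fin (4 * k) => m))

/-- The defining relations `x_1 ⋯ x_n = x_{σ(1)} ⋯ x_{σ(n)}`, `σ ∈ H`. -/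
def qrel (k : ℕ) (hk : 2 ≤ k) (w v : FreeMonoid (Fin (4 * k))) : Prop :=
  w = baseWord k ∧ ∃ g : QuaternionGroup k, v = segWord k hk g 1 (4 * k)

/-- The congruence on the free monoid generated by the defining relations. -/
def qcon (k : ℕ) (hk : 2 ≤ k) : Con (FreeMonoid (Fin (4 * k))) :=
  conGen (qrel k hk)

/-- The monoid `S_n(H) = ⟨a_1, ..., a_n ∣ a_1 ⋯ a_n = a_{σ(1)} ⋯ a_{σ(n)}, σ ∈ H⟩`
where `n = 4k` and `H` is the regular Cayley representation of `Q_{4k}` in `Sym_n`. -/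
abbrev Smon (k : ℕ) (hk : 2 ≤ k) : Type := (qcon k hk).Quotient

namespace S9
variable {k : ℕ} (hk : 2 ≤ k)

lemma qpos_inj (hk : 2 ≤ k) : Function.Injective (qpos k) := by
  haveI : NeZero (2 * k) := ⟨by omega⟩
  rintro (i | i) (j | j) h <;> simp only [qpos] at h
  · exact congrArg _ (ZMod.val_injective _ (by omega))
  · have := i.val_lt; have := (-j).val_lt; omega
  · have := j.val_lt; have := (-i).val_lt; omega
  · have h' : -i = -j := ZMod.val_injective _ (by omega)
    exact congrArg _ (neg_injective h')

lemma qpos_qofpos (hk : 2 ≤ k) {p : ℕ} (h1 : 1 ≤ p) (h2 : p ≤ 4 * k) :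
    qpos k (qofpos k p) = p := by
  haveI : NeZero (2 * k) := ⟨by omega⟩
  unfold qofpos
  by_cases hp : p ≤ 2 * k
  · rw [if_pos hp]
    simp only [qpos]
    rw [ZMod.val_natCast_of_lt (by omega)]
    omega
  · rw [if_neg hp]
    simp only [qpos, neg_neg]
    rw [ZMod.val_natCast_of_lt (by omega)]
    omega

lemma qofpos_one (hk : 2 ≤ k) : qofpos k 1 = 1 := by
  unfold qofpos
  rw [if_pos (by omega)]
  simp

lemma qact_one (hk : 2 ≤ k) (g : QuaternionGroup k) : qact k g 1 = qpos k g := by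
  rw [qact, qofpos_one hk, mul_one]

lemma qletter_eq (hk : 2 ≤ k) {f f' : QuaternionGroup k} {m m' : ℕ}
    (h : qletter k hk f m = qletter k hk f' m') :
    f * qofpos k m = f' * qofpos k m' := by
  have h1 := qpos_bounds k hk (f * qofpos k m)
  have h2 := qpos_bounds k hk (f' * qofpos k m')
  have : qact k f m = qact k f' m' := by
    have := congrArg Fin.val h
    simp only [qletter, qact] at this ⊢
    omega
  exact qpos_inj hk this

lemma two_ne_zero_zmod (hk : 2 ≤ k) : (2 : ZMod (2 * k)) ≠ 0 := by
  haveI : NeZero (2 * k) := ⟨by omega⟩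
  intro h
  have : ((2 : ℕ) : ZMod (2 * k)) = 0 := by exact_mod_cast h
  rw [ZMod.natCast_eq_zero_iff] at this
  have := Nat.le_of_dvd (by norm_num) this
  omega

/-- Master blocking lemma: the function `m ↦ e(m+d) e(m)⁻¹` is non-constant. -/
lemma block (hk : 2 ≤ k) (F h : QuaternionGroup k) (d R : ℕ) (hd : 1 ≤ d)
    (hcond : (d ≤ 2 * k - 1 ∧ 2 * k - d + 1 ≤ R) ∨ (2 * k ≤ d ∧ 2 ≤ R ∧ d ≤ 4 * k - 2))
    (heq : ∀ m, 1 ≤ m → m ≤ R → F * qofpos k m = h * qofpos k (m + d)) : False := by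
  haveI : NeZero (2 * k) := ⟨by omega⟩
  rcases hcond with ⟨hd2, hR⟩ | ⟨hd2, hR, hd3⟩
  · -- low shift: m = 1 gives a-type, m = 2k - d + 1 gives xa-type
    have e1 := heq 1 le_rfl (by omega)
    have e2 := heq (2 * k - d + 1) (by omega) hR
    rw [qofpos_one hk, mul_one] at e1
    have hv1 : qofpos k (1 + d) = QuaternionGroup.a ((d : ℕ) : ZMod (2 * k)) := by
      unfold qofpos; rw [if_pos (by omega), show (1 + d - 1 : ℕ) = d from by omega]
    have hv2 : qofpos k (2 * k - d + 1) = QuaternionGroup.a ((2 * k - d : ℕ) : ZMod (2 * k)) := by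
      unfold qofpos; rw [if_pos (by omega), show (2 * k - d + 1 - 1 : ℕ) = 2 * k - d from by omega]
    have hv3 : qofpos k (2 * k - d + 1 + d) = QuaternionGroup.xa 0 := by
      unfold qofpos; rw [if_neg (by omega)]
      congr 1
      have : (2 * k - d + 1 + d - 2 * k - 1 : ℕ) = 0 := by omega
      rw [this]; simp
    rw [hv1] at e1
    rw [hv2, hv3, e1, mul_assoc, QuaternionGroup.a_mul_a] at e2
    have : ((d : ℕ) : ZMod (2 * k)) + ((2 * k - d : ℕ) : ZMod (2 * k)) = 0 := by
      rw [← Nat.cast_add]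
      have : (d + (2 * k - d) : ℕ) = 2 * k := by omega
      rw [this]; simp
    rw [this] at e2
    have := mul_left_cancel e2
    cases this
  · -- high shift: m = 1, 2 both xa-type, distinct
    have e1 := heq 1 le_rfl (by omega)
    have e2 := heq 2 (by omega) hR
    rw [qofpos_one hk, mul_one] at e1
    have hv1 : qofpos k (1 + d) = QuaternionGroup.xa (-((d - 2 * k : ℕ) : ZMod (2 * k))) := by
      unfold qofpos; rw [if_neg (by omega), show (1 + d - 2 * k - 1 : ℕ) = d - 2 * k from by omega]
    have hv2 : qofpos k 2 = QuaternionGroup.a 1 := by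
      unfold qofpos; rw [if_pos (by omega)]
      congr 1
      have : (2 - 1 : ℕ) = 1 := by omega
      rw [this]; simp
    have hv3 : qofpos k (2 + d) = QuaternionGroup.xa (-(((d - 2 * k : ℕ) + 1 : ℕ) : ZMod (2 * k))) := by
      unfold qofpos; rw [if_neg (by omega), show (2 + d - 2 * k - 1 : ℕ) = d - 2 * k + 1 from by omega]
    rw [hv1] at e1
    rw [hv2, hv3, e1, mul_assoc, QuaternionGroup.xa_mul_a] at e2
    have h3 := QuaternionGroup.xa.inj (mul_left_cancel e2)
    push_cast at h3
    have : (2 : ZMod (2 * k)) = 0 := by linear_combination h3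
    exact two_ne_zero_zmod hk this

/-! ### Words, remnants, steps -/

def patL (hk : 2 ≤ k) (f : QuaternionGroup k) : List (Fin (4 * k)) :=
  (List.range (4 * k)).map (fun j => qletter k hk f (j + 1))

@[simp] lemma patL_length (f : QuaternionGroup k) : (patL hk f).length = 4 * k := by
  simp [patL]

lemma patL_get (f : QuaternionGroup k) {j : ℕ} (hj : j < 4 * k) :
    (patL hk f)[j]? = some (qletter k hk f (1 + j)) := by
  simp [patL, List.getElem?_map, List.getElem?_range hj, Nat.add_comm]

/-- `w` carries letters `σ_f(a), σ_f(a+1), ..., σ_f(a+ℓ-1)` at (0-indexed)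
positions `p, p+1, ..., p+ℓ-1`. -/
def HasRem (hk : 2 ≤ k) (f : QuaternionGroup k) (p a ℓ : ℕ) (w : List (Fin (4 * k))) : Prop :=
  ∀ j, j < ℓ → w[p + j]? = some (qletter k hk f (a + j))

lemma hasRem_mono {f p a ℓ ℓ' w} (h : HasRem hk f p a ℓ w) (h' : ℓ' ≤ ℓ) :
    HasRem hk f p a ℓ' w := fun j hj => h j (lt_of_lt_of_le hj h')

lemma hasRem_of_agree {f p a ℓ w w'} (h : HasRem hk f p a ℓ w)
    (hag : ∀ x, p ≤ x → x < p + ℓ → w'[x]? = w[x]?) : HasRem hk f p a ℓ w' := by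
  intro j hj
  rw [hag (p + j) (by omega) (by omega)]
  exact h j hj

lemma hasRem_shift {f p a ℓ d w} (h : HasRem hk f p a ℓ w) (hd : d ≤ ℓ) :
    HasRem hk f (p + d) (a + d) (ℓ - d) w := by
  intro j hj
  have := h (d + j) (by omega)
  rw [show p + d + j = p + (d + j) from by omega, show a + d + j = a + (d + j) from by omega]
  exact this

/-- A single application of a defining relation at (0-indexed) position `p`. -/
def StepAt (hk : 2 ≤ k) (p : ℕ) (w w' : List (Fin (4 * k))) : Prop :=
  ∃ (f f' : QuaternionGroup k) (pre post : List (Fin (4 * k))), pre.length = p ∧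
    w = pre ++ (patL hk f ++ post) ∧ w' = pre ++ (patL hk f' ++ post)

def Step (hk : 2 ≤ k) (w w' : List (Fin (4 * k))) : Prop := ∃ p, StepAt hk p w w'

lemma stepAt_symm {p w w'} (h : StepAt hk p w w') : StepAt hk p w' w := by
  obtain ⟨f, f', pre, post, h1, h2, h3⟩ := h
  exact ⟨f', f, pre, post, h1, h3, h2⟩

lemma step_symm {w w'} (h : Step hk w w') : Step hk w' w := by
  obtain ⟨p, hp⟩ := h; exact ⟨p, stepAt_symm hk hp⟩

lemma append_pat_get (f : QuaternionGroup k) (pre post : List (Fin (4 * k))) :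
    HasRem hk f pre.length 1 (4 * k) (pre ++ (patL hk f ++ post)) := by
  intro j hj
  rw [List.getElem?_append_right (by omega),
    show pre.length + j - pre.length = j from by omega,
    List.getElem?_append_left (by simp [hj]), patL_get hk f hj, Nat.add_comm 1 j]

lemma append_get_lt (f : QuaternionGroup k) (pre post : List (Fin (4 * k))) {x : ℕ}
    (hx : x < pre.length) : (pre ++ (patL hk f ++ post))[x]? = pre[x]? :=
  List.getElem?_append_left hx

lemma append_get_ge (f : QuaternionGroup k) (pre post : List (Fin (4 * k))) {x : ℕ}
    (hx : pre.length + 4 * k ≤ x) :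
    (pre ++ (patL hk f ++ post))[x]? = post[x - pre.length - 4 * k]? := by
  rw [List.getElem?_append_right (by omega), List.getElem?_append_right (by simp; omega)]
  simp

/-- From a step at `p`: the old word has the pattern `f` at `p`. -/
lemma stepAt_pat {p w w'} (h : StepAt hk p w w') :
    ∃ f, HasRem hk f p 1 (4 * k) w := by
  obtain ⟨f, f', pre, post, h1, h2, h3⟩ := h
  exact ⟨f, by rw [h2, ← h1]; exact append_pat_get hk f pre post⟩

lemma stepAt_pat' {p w w'} (h : StepAt hk p w w') :
    ∃ f', HasRem hk f' p 1 (4 * k) w' := stepAt_pat hk (stepAt_symm hk h)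

lemma stepAt_agree_lt {p w w'} (h : StepAt hk p w w') {x : ℕ} (hx : x < p) :
    w'[x]? = w[x]? := by
  obtain ⟨f, f', pre, post, h1, h2, h3⟩ := h
  subst h1; rw [h2, h3, append_get_lt hk f pre post hx, append_get_lt hk f' pre post hx]

lemma stepAt_agree_ge {p w w'} (h : StepAt hk p w w') {x : ℕ} (hx : p + 4 * k ≤ x) :
    w'[x]? = w[x]? := by
  obtain ⟨f, f', pre, post, h1, h2, h3⟩ := h
  subst h1; rw [h2, h3, append_get_ge hk f pre post hx, append_get_ge hk f' pre post hx]

/-! ### Extracting group equations and blocking -/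

/-- Two remnant structures overlapping at a common position give a group equation. -/
lemma rem_rem_eq {f f' : QuaternionGroup k} {p a ℓ p' a' ℓ' : ℕ} {w : List (Fin (4 * k))}
    (h : HasRem hk f p a ℓ w) (h' : HasRem hk f' p' a' ℓ' w)
    {j j' : ℕ} (hj : j < ℓ) (hj' : j' < ℓ') (hx : p + j = p' + j') :
    f * qofpos k (a + j) = f' * qofpos k (a' + j') := by
  have e1 := h j hj
  have e2 := h' j' hj'
  rw [← hx] at e2
  rw [e1] at e2
  exact qletter_eq hk (Option.some.inj e2)

/-- Blocking: a full pattern at `p` overlapping a remnant (σ_f(1..L) at q) strictly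
from the right by at least 2 letters is impossible. -/
lemma blockL {F f : QuaternionGroup k} {p q L : ℕ} {w : List (Fin (4 * k))}
    (hF : HasRem hk F p 1 (4 * k) w) (hf : HasRem hk f q 1 L w)
    (h1 : q < p) (h2 : p + 2 ≤ q + L) (h3 : 2 * k + 1 ≤ L) (h4 : L ≤ 4 * k) : False := by
  set d := p - q with hd
  apply block hk F f d (L - d) (by omega)
  · by_cases hc : d ≤ 2 * k - 1
    · left; constructor; exact hc; omega
    · right; omega
  · intro m hm1 hm2
    have := rem_rem_eq hk hF hf (j := m - 1) (j' := d + m - 1) (by omega) (by omega) (by omega)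
    rw [show 1 + (m - 1) = m from by omega, show 1 + (d + m - 1) = m + d from by omega] at this
    exact this

/-- Blocking: a full pattern at `p` overlapping a remnant (σ_f(1..L) at q, q > p)
from the left is impossible, provided the remnant is long enough relative to the shift. -/
lemma blockR {F f : QuaternionGroup k} {p q L : ℕ} {w : List (Fin (4 * k))}
    (hF : HasRem hk F p 1 (4 * k) w) (hf : HasRem hk f q 1 L w)
    (h1 : p < q) (h2 : q - p ≤ 4 * k - 2) (h3 : 2 * k + 1 - (q - p) ≤ L) (h4 : 2 ≤ L) :
    False := by
  set d := q - p with hd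
  apply block hk f F d (min L (4 * k - d)) (by omega)
  · by_cases hc : d ≤ 2 * k - 1
    · left; constructor; exact hc; omega
    · right; refine ⟨by omega, by omega, by omega⟩
  · intro m hm1 hm2
    have := rem_rem_eq hk hf hF (j := m - 1) (j' := d + m - 1) (by omega) (by omega) (by omega)
    rw [show 1 + (m - 1) = m from by omega, show 1 + (d + m - 1) = m + d from by omega] at this
    exact this

/-! ### Chains -/

/-- A protected chain of pattern remnants rooted at position `q`:
either a full pattern at `q`, or the first `n-1` letters of a pattern at `q`
followed by a chain rooted at `q + (n-1)`. -/
inductive Chain (hk : 2 ≤ k) (w : List (Fin (4 * k))) : ℕ → Prop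
  | full (f q) : HasRem hk f q 1 (4 * k) w → Chain hk w q
  | cons (f q) : HasRem hk f q 1 (4 * k - 1) w → Chain hk w (q + (4 * k - 1)) → Chain hk w q

lemma chain_root {w q} (h : Chain hk w q) : ∃ f, HasRem hk f q 1 (4 * k - 1) w := by
  cases h with
  | full f q hf => exact ⟨f, hasRem_mono hk hf (by omega)⟩
  | cons f q hf _ => exact ⟨f, hf⟩

lemma chain_congr {w w' : List (Fin (4 * k))} {q} (h : Chain hk w q)
    (hag : ∀ x, q ≤ x → w'[x]? = w[x]?) : Chain hk w' q := by
  induction h with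
  | full f q hf => exact Chain.full f q (hasRem_of_agree hk hf (fun x hx _ => hag x hx))
  | cons f q hf _ ih =>
      exact Chain.cons f q (hasRem_of_agree hk hf (fun x hx _ => hag x hx))
        (ih (fun x hx => hag x (by omega)))

/-- Chain preservation: a rewrite at position `p ≥ q` preserves a chain rooted at `q`. -/
lemma chain_pres {w w' : List (Fin (4 * k))} {q p : ℕ} (h : Chain hk w q)
    (hs : StepAt hk p w w') (hpq : q ≤ p) : Chain hk w' q := by
  induction h with
  | full f q hf =>
      obtain ⟨F, hF⟩ := stepAt_pat hk hs
      obtain ⟨F', hF'⟩ := stepAt_pat' hk hs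
      rcases eq_or_lt_of_le hpq with rfl | hlt
      · exact Chain.full F' _ hF'
      · by_cases hc : p ≤ q + 4 * k - 2
        · exact absurd (blockL hk hF hf hlt (by omega) (by omega) (by omega)) (by simp)
        · by_cases hc2 : p = q + (4 * k - 1)
          · refine Chain.cons f q ?_ (hc2 ▸ Chain.full F' _ hF')
            exact hasRem_of_agree hk (hasRem_mono hk hf (by omega))
              (fun x hx hx2 => stepAt_agree_lt hk hs (by omega))
          · refine Chain.full f q (hasRem_of_agree hk hf (fun x hx hx2 => ?_))
            exact stepAt_agree_lt hk hs (by omega)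
  | cons f q hf hsub ih =>
      obtain ⟨F, hF⟩ := stepAt_pat hk hs
      obtain ⟨F', hF'⟩ := stepAt_pat' hk hs
      rcases eq_or_lt_of_le hpq with rfl | hlt
      · exact Chain.full F' _ hF'
      · by_cases hc : p ≤ q + 4 * k - 3
        · exact absurd (blockL hk hF hf hlt (by omega) (by omega) (by omega)) (by simp)
        · by_cases hc2 : p = q + (4 * k - 1) - 1
          · -- pattern just left of the subchain root: blocked by subchain root remnant
            obtain ⟨c, hc3⟩ := chain_root hk hsub
            exact absurd (blockR hk hF hc3 (by omega) (by omega) (by omega) (by omega))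
              (by simp)
          · refine Chain.cons f q (hasRem_of_agree hk hf (fun x hx hx2 => ?_)) (ih (by omega))
            exact stepAt_agree_lt hk hs (by omega)

/-! ### The invariants -/

/-- First letters of patterns coincide only for equal group elements. -/
lemma first_eq {F G₀ : QuaternionGroup k} {p L : ℕ} {w : List (Fin (4 * k))}
    (hF : HasRem hk F p 1 (4 * k) w) (hG : HasRem hk G₀ p 1 L w) (hL : 1 ≤ L) : F = G₀ := by
  have := rem_rem_eq hk hF hG (j := 0) (j' := 0) (by omega) (by omega) rfl
  exact mul_right_cancel this

lemma qletter_congr {f f' : QuaternionGroup k} {m m' : ℕ}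
    (h : f * qofpos k m = f' * qofpos k m') : qletter k hk f m = qletter k hk f' m' := by
  apply Fin.ext
  simp only [qletter, qact, h]

/-- Degraded mode: the position `n` (0-indexed `n-1`) starts an `f₁`-remnant of
length `ℓ`, protected either by its length or by a chain guard right after it. -/
def Dmode (hk : 2 ≤ k) (w : List (Fin (4 * k))) : Prop :=
  ∃ f₁ ℓ, 1 ≤ ℓ ∧ ℓ ≤ 4 * k - 1 ∧ HasRem hk f₁ (4 * k - 1) 1 ℓ w ∧
    (2 * k ≤ ℓ ∨ Chain hk w (4 * k - 1 + ℓ))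

/-- Stable prefix structure (used for first-letter preserving segments). -/
def SM (hk : 2 ≤ k) (g : QuaternionGroup k) (w : List (Fin (4 * k))) : Prop :=
  HasRem hk g 0 1 (4 * k) w ∨ (HasRem hk g 0 1 (4 * k - 1) w ∧ Dmode hk w)

/-- Other-side structure: full pattern of some `g' ≠ g` at the front, with a
protected trace of `h₀ = g·e(n)` after position `n`. -/
def OT (hk : 2 ≤ k) (g : QuaternionGroup k) (w : List (Fin (4 * k))) : Prop :=
  ∃ g', g' ≠ g ∧ HasRem hk g' 0 1 (4 * k) w ∧
    ∃ ℓ', ℓ' ≤ 4 * k - 2 ∧ HasRem hk (g * qofpos k (4 * k)) (4 * k) 2 ℓ' w ∧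
      (2 * k - 1 ≤ ℓ' ∨ Chain hk w (4 * k + ℓ'))

def INV (hk : 2 ≤ k) (g : QuaternionGroup k) (w : List (Fin (4 * k))) : Prop :=
  (HasRem hk g 0 1 (4 * k - 1) w ∧ Dmode hk w) ∨ OT hk g w

/-- Preservation of `SM` under steps at positions `≥ 1`. -/
lemma sm_pres {g : QuaternionGroup k} {w w' : List (Fin (4 * k))} {p : ℕ}
    (hsm : SM hk g w) (hs : StepAt hk p w w') (hp : 1 ≤ p) : SM hk g w' := by
  obtain ⟨F, hF⟩ := stepAt_pat hk hs
  obtain ⟨F', hF'⟩ := stepAt_pat' hk hs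
  have hpre : HasRem hk g 0 1 (4 * k - 1) w := by
    rcases hsm with h | ⟨h, _⟩
    · exact hasRem_mono hk h (by omega)
    · exact h
  by_cases hA : p ≤ 4 * k - 3
  · exact (blockL hk hF hpre (by omega) (by omega) (by omega) (by omega)).elim
  by_cases hB : p = 4 * k - 2
  · exfalso
    rcases hsm with h | ⟨_, f₁, ℓ, hl1, hl2, halive, hcond⟩
    · exact blockL hk hF h (by omega) (by omega) (by omega) (by omega)
    · by_cases hll : 2 * k ≤ ℓ
      · exact blockR hk hF halive (by omega) (by omega) (by omega) (by omega)
      · obtain ⟨c, hc3⟩ := chain_root hk (hcond.resolve_left hll)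
        exact blockR hk hF hc3 (by omega) (by omega) (by omega) (by omega)
  by_cases hC : p = 4 * k - 1
  · refine Or.inr ⟨hasRem_of_agree hk hpre
      (fun x hx hx2 => stepAt_agree_lt hk hs (by omega)), F', 4 * k - 1, by omega, by omega,
      ?_, Or.inl (by omega)⟩
    rw [← hC]
    exact hasRem_mono hk hF' (by omega)
  -- now p ≥ 4k
  have hp4 : 4 * k ≤ p := by omega
  rcases hsm with h | ⟨_, f₁, ℓ, hl1, hl2, halive, hcond⟩
  · exact Or.inl (hasRem_of_agree hk h (fun x hx hx2 => stepAt_agree_lt hk hs (by omega)))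
  · refine Or.inr ⟨hasRem_of_agree hk hpre
      (fun x hx hx2 => stepAt_agree_lt hk hs (by omega)), ?_⟩
    by_cases hpq : p ≤ 4 * k - 1 + ℓ
    · refine ⟨f₁, p - (4 * k - 1), by omega, by omega,
        hasRem_of_agree hk (hasRem_mono hk halive (by omega))
          (fun x hx hx2 => stepAt_agree_lt hk hs (by omega)), Or.inr ?_⟩
      rw [show 4 * k - 1 + (p - (4 * k - 1)) = p from by omega]
      exact Chain.full F' p hF'
    · refine ⟨f₁, ℓ, hl1, hl2,
        hasRem_of_agree hk halive (fun x hx hx2 => stepAt_agree_lt hk hs (by omega)), ?_⟩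
      rcases hcond with hc | hc
      · exact Or.inl hc
      · exact Or.inr (chain_pres hk hc hs (by omega))

/-- Preservation of the two-sided invariant `INV` under arbitrary steps. -/
lemma inv_pres {g : QuaternionGroup k} {w w' : List (Fin (4 * k))} {p : ℕ}
    (hinv : INV hk g w) (hs : StepAt hk p w w') : INV hk g w' := by
  obtain ⟨F, hF⟩ := stepAt_pat hk hs
  obtain ⟨F', hF'⟩ := stepAt_pat' hk hs
  rcases hinv with ⟨hpre, f₁, ℓ, hl1, hl2, halive, hcond⟩ | ⟨g', hg', hfull, ℓ', hl2', halive, hcond⟩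
  · -- left (same-side) mode
    by_cases hp0 : p = 0
    · subst hp0
      -- a rewrite at the front; the old pattern must be g, and f₁ = g * e(n)
      have hFg : F = g := first_eq hk hF hpre (by omega)
      have hf₁ : f₁ = g * qofpos k (4 * k) := by
        have := rem_rem_eq hk halive hF (j := 0) (j' := 4 * k - 1) (by omega) (by omega)
          (by omega)
        rw [show (1 : ℕ) + 0 = 1 from rfl, show 1 + (4 * k - 1) = 4 * k from by omega,
          qofpos_one hk, mul_one] at this
        rw [this, hFg]
      by_cases hF'g : F' = g
      · -- stays on the same side
        subst hF'g
        refine Or.inl ⟨hasRem_mono hk hF' (by omega), f₁, ℓ, hl1, hl2, ?_, ?_⟩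
        · intro j hj
          rcases Nat.eq_zero_or_pos j with rfl | hjpos
          · have := hF' (4 * k - 1) (by omega)
            rw [show (0:ℕ) + (4 * k - 1) = 4 * k - 1 + 0 from by omega] at this
            rw [this]
            congr 1
            refine (qletter_congr hk ?_).symm
            rw [show (1 : ℕ) + 0 = 1 from rfl, show 1 + (4 * k - 1) = 4 * k from by omega,
              qofpos_one hk, mul_one, hf₁]
          · rw [stepAt_agree_ge hk hs (by omega)]
            exact halive j hj
        · rcases hcond with hc | hc
          · exact Or.inl hc
          · exact Or.inr (chain_congr hk hc (fun x hx => stepAt_agree_ge hk hs (by omega)))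
      · -- crosses to the other side
        refine Or.inr ⟨F', hF'g, hF', ℓ - 1, by omega, ?_, ?_⟩
        · intro j hj
          rw [show 4 * k + j = 0 + (4 * k + j) from by omega, stepAt_agree_ge hk hs (by omega)]
          have := halive (1 + j) (by omega)
          rw [show 4 * k - 1 + (1 + j) = 0 + (4 * k + j) from by omega] at this
          rw [this]
          congr 1
          refine qletter_congr hk ?_
          rw [hf₁, show 1 + (1 + j) = 2 + j from by omega]
        · rcases hcond with hc | hc
          · exact Or.inl (by omega)
          · refine Or.inr ?_
            rw [show 4 * k + (ℓ - 1) = 4 * k - 1 + ℓ from by omega]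
            exact chain_congr hk hc (fun x hx => stepAt_agree_ge hk hs (by omega))
    · -- steps at p ≥ 1 preserve the left mode
      have hp1 : 1 ≤ p := by omega
      by_cases hA : p ≤ 4 * k - 3
      · exact (blockL hk hF hpre (by omega) (by omega) (by omega) (by omega)).elim
      by_cases hB : p = 4 * k - 2
      · exfalso
        by_cases hll : 2 * k ≤ ℓ
        · exact blockR hk hF halive (by omega) (by omega) (by omega) (by omega)
        · obtain ⟨c, hc3⟩ := chain_root hk (hcond.resolve_left hll)
          exact blockR hk hF hc3 (by omega) (by omega) (by omega) (by omega)
      have hprew : HasRem hk g 0 1 (4 * k - 1) w' :=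
        hasRem_of_agree hk hpre (fun x hx hx2 => stepAt_agree_lt hk hs (by omega))
      by_cases hC : p = 4 * k - 1
      · refine Or.inl ⟨hprew, F', 4 * k - 1, by omega, by omega, ?_, Or.inl (by omega)⟩
        rw [← hC]
        exact hasRem_mono hk hF' (by omega)
      have hp4 : 4 * k ≤ p := by omega
      refine Or.inl ⟨hprew, ?_⟩
      by_cases hpq : p ≤ 4 * k - 1 + ℓ
      · refine ⟨f₁, p - (4 * k - 1), by omega, by omega,
          hasRem_of_agree hk (hasRem_mono hk halive (by omega))
            (fun x hx hx2 => stepAt_agree_lt hk hs (by omega)), Or.inr ?_⟩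
        rw [show 4 * k - 1 + (p - (4 * k - 1)) = p from by omega]
        exact Chain.full F' p hF'
      · refine ⟨f₁, ℓ, hl1, hl2,
          hasRem_of_agree hk halive (fun x hx hx2 => stepAt_agree_lt hk hs (by omega)), ?_⟩
        rcases hcond with hc | hc
        · exact Or.inl hc
        · exact Or.inr (chain_pres hk hc hs (by omega))
  · -- right (other-side) mode
    by_cases hp0 : p = 0
    · subst hp0
      have hFg : F = g' := first_eq hk hF hfull (by omega)
      by_cases hF'g : F' = g
      · -- crosses back to the same side
        rw [hF'g] at hF'
        refine Or.inl ⟨hasRem_mono hk hF' (by omega), g * qofpos k (4 * k), ℓ' + 1, by omega,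
          by omega, ?_, ?_⟩
        · intro j hj
          rcases Nat.eq_zero_or_pos j with rfl | hjpos
          · have := hF' (4 * k - 1) (by omega)
            rw [show (0:ℕ) + (4 * k - 1) = 4 * k - 1 + 0 from by omega] at this
            rw [this]
            congr 1
            refine (qletter_congr hk ?_).symm
            rw [show (1 : ℕ) + 0 = 1 from rfl, show 1 + (4 * k - 1) = 4 * k from by omega,
              qofpos_one hk, mul_one]
          · rw [show 4 * k - 1 + j = 0 + (4 * k + (j - 1)) from by omega,
              stepAt_agree_ge hk hs (by omega)]
            have := halive (j - 1) (by omega)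
            rw [show 4 * k + (j - 1) = 0 + (4 * k + (j - 1)) from by omega] at this
            rw [this]
            congr 1
            refine qletter_congr hk ?_
            rw [show 2 + (j - 1) = 1 + j from by omega]
        · rcases hcond with hc | hc
          · exact Or.inl (by omega)
          · refine Or.inr ?_
            rw [show 4 * k - 1 + (ℓ' + 1) = 4 * k + ℓ' from by omega]
            exact chain_congr hk hc (fun x hx => stepAt_agree_ge hk hs (by omega))
      · -- stays on the other side
        refine Or.inr ⟨F', hF'g, hF', ℓ', hl2', ?_, ?_⟩
        · exact hasRem_of_agree hk halive
            (fun x hx hx2 => stepAt_agree_ge hk hs (by omega))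
        · rcases hcond with hc | hc
          · exact Or.inl hc
          · exact Or.inr (chain_congr hk hc (fun x hx => stepAt_agree_ge hk hs (by omega)))
    · by_cases hA : p ≤ 4 * k - 2
      · exact (blockL hk hF hfull (by omega) (by omega) (by omega) (by omega)).elim
      by_cases hB : p = 4 * k - 1
      · exfalso
        rcases Nat.eq_zero_or_pos ℓ' with rfl | hl'pos
        · -- no trace letters: guard chain at 4k blocks
          rcases hcond with hc | hc
          · omega
          · obtain ⟨c, hc3⟩ := chain_root hk hc
            rw [show 4 * k + 0 = 4 * k from by omega] at hc3
            exact blockR hk hF hc3 (by omega) (by omega) (by omega) (by omega)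
        · -- a trace letter survives: F = h₀ and F = g'·e(n), contradiction
          have h1 : F = g * qofpos k (4 * k) := by
            have := rem_rem_eq hk hF halive (j := 1) (j' := 0) (by omega) (by omega) (by omega)
            rw [show (2 : ℕ) + 0 = 1 + 1 from rfl] at this
            exact mul_right_cancel this
          have h2 : F = g' * qofpos k (4 * k) := by
            have := rem_rem_eq hk hF hfull (j := 0) (j' := 4 * k - 1) (by omega) (by omega)
              (by omega)
            rw [show (1 : ℕ) + 0 = 1 from rfl, show 1 + (4 * k - 1) = 4 * k from by omega,
              qofpos_one hk, mul_one] at this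
            exact this
          exact hg' (mul_right_cancel (h2.symm.trans h1))
      -- p ≥ 4k
      have hp4 : 4 * k ≤ p := by omega
      refine Or.inr ⟨g', hg', hasRem_of_agree hk hfull
        (fun x hx hx2 => stepAt_agree_lt hk hs (by omega)), ?_⟩
      by_cases hpq : p ≤ 4 * k + ℓ'
      · refine ⟨p - 4 * k, by omega,
          hasRem_of_agree hk (hasRem_mono hk halive (by omega))
            (fun x hx hx2 => stepAt_agree_lt hk hs (by omega)), Or.inr ?_⟩
        rw [show 4 * k + (p - 4 * k) = p from by omega]
        exact Chain.full F' p hF'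
      · refine ⟨ℓ', hl2',
          hasRem_of_agree hk halive (fun x hx hx2 => stepAt_agree_lt hk hs (by omega)), ?_⟩
        rcases hcond with hc | hc
        · exact Or.inl hc
        · exact Or.inr (chain_pres hk hc hs (by omega))

/-! ### From the congruence to chains of steps -/

lemma step_append {w w' x y : List (Fin (4 * k))} (h : Step hk w w') :
    Step hk (x ++ w ++ y) (x ++ w' ++ y) := by
  obtain ⟨p, f, f', pre, post, h1, h2, h3⟩ := h
  exact ⟨(x ++ pre).length, f, f', x ++ pre, post ++ y, rfl,
    by rw [h2]; simp, by rw [h3]; simp⟩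

lemma eqvgen_append {w w' x y : List (Fin (4 * k))}
    (h : Relation.EqvGen (Step hk) w w') :
    Relation.EqvGen (Step hk) (x ++ w ++ y) (x ++ w' ++ y) := by
  induction h with
  | rel a b hab => exact Relation.EqvGen.rel _ _ (step_append hk hab)
  | refl a => exact Relation.EqvGen.refl _
  | symm a b _ ih => exact ih.symm _ _
  | trans a b c _ _ ih1 ih2 => exact ih1.trans _ _ _ ih2

/-- The congruence generated by steps, as a `Con` on the free monoid. -/
def stepCon (hk : 2 ≤ k) : Con (FreeMonoid (Fin (4 * k))) where
  r a b := Relation.EqvGen (Step hk) (FreeMonoid.toList a) (FreeMonoid.toList b)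
  iseqv := ⟨fun _ => Relation.EqvGen.refl _, (Relation.EqvGen.symm _ _),
    (Relation.EqvGen.trans _ _ _)⟩
  mul' := by
    intro a b c d hab hcd
    have h1 : Relation.EqvGen (Step hk) (FreeMonoid.toList (a * c)) (FreeMonoid.toList (b * c)) := by
      rw [FreeMonoid.toList_mul, FreeMonoid.toList_mul]
      have := eqvgen_append hk (x := ([] : List (Fin (4 * k)))) (y := FreeMonoid.toList c) hab
      simpa using this
    have h2 : Relation.EqvGen (Step hk) (FreeMonoid.toList (b * c)) (FreeMonoid.toList (b * d)) := by
      rw [FreeMonoid.toList_mul, FreeMonoid.toList_mul]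
      have := eqvgen_append hk (x := FreeMonoid.toList b) (y := ([] : List (Fin (4 * k)))) hcd
      simpa using this
    exact h1.trans _ _ _ h2

lemma patL_one : patL hk 1 = List.ofFn (fun m : Fin (4 * k) => m) := by
  apply List.ext_getElem?
  intro i
  by_cases hi : i < 4 * k
  · rw [patL_get hk 1 hi]
    rw [List.getElem?_ofFn]
    simp only [List.ofFnNthVal, hi, dif_pos]
    congr 1
    apply Fin.ext
    simp only [qletter, qact, one_mul]
    rw [qpos_qofpos hk (by omega) (by omega)]
    omega
  · rw [List.getElem?_eq_none (by simp [patL]; omega), List.getElem?_eq_none (by simp; omega)]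

lemma patL_seg (g : QuaternionGroup k) :
    (segWord k hk g 1 (4 * k)).toList = patL hk g := by
  show (List.range' 1 (4 * k)).map (qletter k hk g) = _
  apply List.ext_getElem?
  intro i
  by_cases hi : i < 4 * k
  · rw [List.getElem?_map, patL_get hk g hi, show (List.range' 1 (4 * k))[i]? = some (1 + i) from by simp [List.getElem?_range', hi]]
    simp
  · rw [List.getElem?_eq_none (by simp; omega), List.getElem?_eq_none (by simp [patL]; omega)]

lemma qcon_le_stepCon : qcon k hk ≤ stepCon hk := by
  apply (Con.conGen_le).mpr
  rintro x y ⟨rfl, g, rfl⟩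
  apply Relation.EqvGen.rel
  refine ⟨0, 1, g, [], [], rfl, ?_, ?_⟩
  · show FreeMonoid.toList (baseWord k) = [] ++ (patL hk 1 ++ [])
    rw [patL_one hk]
    simp [baseWord]
  · show (segWord k hk g 1 (4 * k)).toList = [] ++ (patL hk g ++ [])
    rw [patL_seg hk]
    simp

lemma eqvgen_to_rtg {a b : List (Fin (4 * k))} (h : Relation.EqvGen (Step hk) a b) :
    Relation.ReflTransGen (Step hk) a b := by
  induction h with
  | rel a b hab => exact Relation.ReflTransGen.single hab
  | refl a => exact Relation.ReflTransGen.refl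
  | symm a b _ ih => exact (by haveI : Std.Symm (Step hk) := ⟨fun _ _ h => step_symm hk h⟩; exact Std.Symm.symm _ _ ih)
  | trans a b c _ _ ih1 ih2 => exact ih1.trans ih2

/-- A step at a position `≥ 1`. -/
def Step1 (hk : 2 ≤ k) (w w' : List (Fin (4 * k))) : Prop := ∃ p, 1 ≤ p ∧ StepAt hk p w w'

lemma split_first {a b : List (Fin (4 * k))} (h : Relation.ReflTransGen (Step hk) a b)
    (hne : a[0]? ≠ b[0]?) :
    ∃ u, Relation.ReflTransGen (Step1 hk) a u ∧ ∃ F, HasRem hk F 0 1 (4 * k) u := by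
  induction h using Relation.ReflTransGen.head_induction_on with
  | refl => exact absurd rfl hne
  | @head aa cc hstep htail ih =>
      obtain ⟨p, hp⟩ := hstep
      rcases Nat.eq_zero_or_pos p with rfl | hppos
      · obtain ⟨F, hF⟩ := stepAt_pat hk hp
        exact ⟨aa, Relation.ReflTransGen.refl, F, hF⟩
      · have h0 : cc[0]? = aa[0]? := stepAt_agree_lt hk hp (by omega)
        obtain ⟨u, hu1, hu2⟩ := ih (by rw [h0]; exact hne)
        exact ⟨u, Relation.ReflTransGen.head ⟨p, by omega, hp⟩ hu1, hu2⟩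

lemma sm_rtg {g : QuaternionGroup k} {u a : List (Fin (4 * k))}
    (h : Relation.ReflTransGen (Step1 hk) u a) (hsm : SM hk g u) : SM hk g a := by
  induction h with
  | refl => exact hsm
  | tail _ hstep ih =>
      obtain ⟨p, hp1, hp⟩ := hstep
      exact sm_pres hk ih hp hp1

lemma inv_rtg {g : QuaternionGroup k} {a b : List (Fin (4 * k))}
    (h : Relation.ReflTransGen (Step hk) a b) (hinv : INV hk g a) : INV hk g b := by
  induction h with
  | refl => exact hinv
  | tail _ hstep ih =>
      obtain ⟨p, hp⟩ := hstep
      exact inv_pres hk ih hp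

/-- The core asymmetric statement: if the first letters differ and `w1` is not
full at position `n`, then `w2` is full at position `n`. -/
lemma main_half {w1 w2 : List (Fin (4 * k))} {g τ : QuaternionGroup k}
    (h12 : Relation.ReflTransGen (Step hk) w1 w2) (hne : w1[0]? ≠ w2[0]?)
    (hsm1 : SM hk g w1) (hpre2 : HasRem hk τ 0 1 (4 * k - 1) w2)
    (hnf : w1[(4 * k - 1 : ℕ)]? ≠ some (qletter k hk g (4 * k))) :
    w2[(4 * k - 1 : ℕ)]? = some (qletter k hk τ (4 * k)) := by
  have hpre1 : HasRem hk g 0 1 (4 * k - 1) w1 := by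
    rcases hsm1 with h | ⟨h, _⟩
    · exact hasRem_mono hk h (by omega)
    · exact h
  have hD : Dmode hk w1 := by
    rcases hsm1 with h | ⟨_, hD⟩
    · exfalso
      apply hnf
      have := h (4 * k - 1) (by omega)
      rw [show (0 : ℕ) + (4 * k - 1) = 4 * k - 1 from by omega,
        show (1 : ℕ) + (4 * k - 1) = 4 * k from by omega] at this
      exact this
    · exact hD
  have hinv2 : INV hk g w2 := inv_rtg hk h12 (Or.inl ⟨hpre1, hD⟩)
  rcases hinv2 with ⟨hpre2', _⟩ | ⟨g'', hg'', hfull, _⟩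
  · exfalso
    apply hne
    have e1 := hpre1 0 (by omega)
    have e2 := hpre2' 0 (by omega)
    rw [e1, e2]
  · have hτ : g'' = τ := first_eq hk hfull hpre2 (by omega)
    have := hfull (4 * k - 1) (by omega)
    rw [show (0 : ℕ) + (4 * k - 1) = 4 * k - 1 from by omega,
      show (1 : ℕ) + (4 * k - 1) = 4 * k from by omega, hτ] at this
    exact this


lemma step1_symm {w w' : List (Fin (4 * k))} (h : Step1 hk w w') : Step1 hk w' w := by
  obtain ⟨p, hp1, hp⟩ := h
  exact ⟨p, hp1, stepAt_symm hk hp⟩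


end S9

open S9 in
/-- if `π(x_{i_1} ⋯ x_{i_r}) = π(x_{j_1} ⋯ x_{j_r})` with `i_1 ≠ j_1`,
then `r ≥ n`, the first `n - 1` letters of each word are prescribed by elements
`σ, τ ∈ H` (`i_m = σ(m)` and `j_m = τ(m)` for `1 ≤ m ≤ n - 1`), and exactly one of
(1) `σ(n) = i_n ∧ τ(n) = j_n`, (2) `σ(n) = i_n ∧ τ(n) ≠ j_n`,
(3) `σ(n) ≠ i_n ∧ τ(n) = j_n` holds. (The letter `x_{i_m}` is recorded `0`-indexed
as `I m : Fin (4 * k)`, so that `i_m = (I m).val + 1`.) -/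
theorem stmt9 (k : ℕ) (hk : 2 ≤ k) (r : ℕ) (hr : 1 ≤ r) (I J : ℕ → Fin (4 * k))
    (hπ : (qcon k hk).mk' (FreeMonoid.ofList (List.ofFn fun m : Fin r => I (m.val + 1)))
        = (qcon k hk).mk' (FreeMonoid.ofList (List.ofFn fun m : Fin r => J (m.val + 1))))
    (hne : I 1 ≠ J 1) :
    4 * k ≤ r ∧
    ∃ g h : QuaternionGroup k,
      (∀ m, 1 ≤ m → m ≤ 4 * k - 1 →
        ((I m).val + 1 = qact k g m ∧ (J m).val + 1 = qact k h m)) ∧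
      ((qact k g (4 * k) = (I (4 * k)).val + 1 ∧ qact k h (4 * k) = (J (4 * k)).val + 1) ∨
       (qact k g (4 * k) = (I (4 * k)).val + 1 ∧ qact k h (4 * k) ≠ (J (4 * k)).val + 1) ∨
       (qact k g (4 * k) ≠ (I (4 * k)).val + 1 ∧ qact k h (4 * k) = (J (4 * k)).val + 1)) := by
  set L1 : List (Fin (4 * k)) := List.ofFn (fun m : Fin r => I (m.val + 1)) with hL1
  set L2 : List (Fin (4 * k)) := List.ofFn (fun m : Fin r => J (m.val + 1)) with hL2
  have hgetI : ∀ x : ℕ, x < r → L1[x]? = some (I (x + 1)) := by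
    intro x hx
    rw [hL1]
    simp [List.getElem?_ofFn, List.ofFnNthVal, hx]
  have hgetJ : ∀ x : ℕ, x < r → L2[x]? = some (J (x + 1)) := by
    intro x hx
    rw [hL2]
    simp [List.getElem?_ofFn, List.ofFnNthVal, hx]
  -- from the congruence to a chain of steps
  have hπ' : ((FreeMonoid.ofList L1 : FreeMonoid (Fin (4*k))) : (qcon k hk).Quotient)
      = ((FreeMonoid.ofList L2 : FreeMonoid (Fin (4*k))) : (qcon k hk).Quotient) := by
    exact hπ
  have hcon : qcon k hk (FreeMonoid.ofList L1) (FreeMonoid.ofList L2) := (Con.eq _).mp hπ'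
  have hstep : stepCon hk (FreeMonoid.ofList L1) (FreeMonoid.ofList L2) :=
    qcon_le_stepCon hk hcon
  have hrtg : Relation.ReflTransGen (Step hk) L1 L2 := eqvgen_to_rtg hk hstep
  have hne0 : L1[(0 : ℕ)]? ≠ L2[(0 : ℕ)]? := by
    rw [hgetI 0 (by omega), hgetJ 0 (by omega)]
    intro hcontra
    exact hne (Option.some.inj hcontra)
  -- structure at the two ends
  obtain ⟨u, hu1, g, hgu⟩ := split_first hk hrtg hne0
  have hsm1 : SM hk g L1 := sm_rtg hk
    (by haveI : Std.Symm (Step1 hk) := ⟨fun _ _ h => step1_symm hk h⟩; exact Std.Symm.symm _ _ hu1) (Or.inl hgu)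
  have hrtg' : Relation.ReflTransGen (Step hk) L2 L1 :=
    (by haveI : Std.Symm (Step hk) := ⟨fun _ _ h => step_symm hk h⟩; exact Std.Symm.symm _ _ hrtg)
  obtain ⟨v, hv1, τ, hτv⟩ := split_first hk hrtg' (Ne.symm hne0)
  have hsm2 : SM hk τ L2 := sm_rtg hk
    (by haveI : Std.Symm (Step1 hk) := ⟨fun _ _ h => step1_symm hk h⟩; exact Std.Symm.symm _ _ hv1) (Or.inl hτv)
  have hpre1 : HasRem hk g 0 1 (4 * k - 1) L1 := by
    rcases hsm1 with h | ⟨h, _⟩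
    · exact hasRem_mono hk h (by omega)
    · exact h
  have hpre2 : HasRem hk τ 0 1 (4 * k - 1) L2 := by
    rcases hsm2 with h | ⟨h, _⟩
    · exact hasRem_mono hk h (by omega)
    · exact h
  -- r ≥ 4k
  have hrn : 4 * k ≤ r := by
    have hsome : ∃ z, L1[(4 * k - 1 : ℕ)]? = some z := by
      rcases hsm1 with h | ⟨_, f₁, ℓ, hl1, _, halive, _⟩
      · exact ⟨_, by have := h (4 * k - 1) (by omega); simpa using this⟩
      · exact ⟨_, by have := halive 0 (by omega); simpa using this⟩
    obtain ⟨z, hz⟩ := hsome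
    obtain ⟨hlt, -⟩ := List.getElem?_eq_some_iff.mp hz
    have hlen : L1.length = r := by rw [hL1]; simp
    omega
  refine ⟨hrn, g, τ, ?_, ?_⟩
  · intro m hm1 hm2
    constructor
    · have e := hpre1 (m - 1) (by omega)
      rw [show (0 : ℕ) + (m - 1) = m - 1 from by omega,
        show (1 : ℕ) + (m - 1) = m from by omega, hgetI (m - 1) (by omega),
        show m - 1 + 1 = m from by omega] at e
      have : I m = qletter k hk g m := Option.some.inj e
      have hq := qpos_bounds k hk (g * qofpos k m)
      have := congrArg Fin.val this
      simp only [qletter, qact] at this hq ⊢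
      omega
    · have e := hpre2 (m - 1) (by omega)
      rw [show (0 : ℕ) + (m - 1) = m - 1 from by omega,
        show (1 : ℕ) + (m - 1) = m from by omega, hgetJ (m - 1) (by omega),
        show m - 1 + 1 = m from by omega] at e
      have : J m = qletter k hk τ m := Option.some.inj e
      have hq := qpos_bounds k hk (τ * qofpos k m)
      have := congrArg Fin.val this
      simp only [qletter, qact] at this hq ⊢
      omega
  · -- bridges between letter facts and the `qact` statements
    have hIbr : L1[(4 * k - 1 : ℕ)]? = some (qletter k hk g (4 * k)) ↔
        qact k g (4 * k) = (I (4 * k)).val + 1 := by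
      rw [hgetI (4 * k - 1) (by omega), show 4 * k - 1 + 1 = 4 * k from by omega]
      have hq := qpos_bounds k hk (g * qofpos k (4 * k))
      constructor
      · intro h
        have := congrArg Fin.val (Option.some.inj h)
        simp only [qletter, qact] at this hq ⊢
        omega
      · intro h
        have : I (4 * k) = qletter k hk g (4 * k) := by
          apply Fin.ext
          simp only [qletter, qact] at h ⊢
          omega
        rw [this]
    have hJbr : L2[(4 * k - 1 : ℕ)]? = some (qletter k hk τ (4 * k)) ↔
        qact k τ (4 * k) = (J (4 * k)).val + 1 := by
      rw [hgetJ (4 * k - 1) (by omega), show 4 * k - 1 + 1 = 4 * k from by omega]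
      have hq := qpos_bounds k hk (τ * qofpos k (4 * k))
      constructor
      · intro h
        have := congrArg Fin.val (Option.some.inj h)
        simp only [qletter, qact] at this hq ⊢
        omega
      · intro h
        have : J (4 * k) = qletter k hk τ (4 * k) := by
          apply Fin.ext
          simp only [qletter, qact] at h ⊢
          omega
        rw [this]
    by_cases hFI : qact k g (4 * k) = (I (4 * k)).val + 1
    · by_cases hFJ : qact k τ (4 * k) = (J (4 * k)).val + 1
      · exact Or.inl ⟨hFI, hFJ⟩
      · exact Or.inr (Or.inl ⟨hFI, hFJ⟩)
    · refine Or.inr (Or.inr ⟨hFI, ?_⟩)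
      have := main_half hk hrtg hne0 hsm1 hpre2 (fun h => hFI (hIbr.mp h))
      exact hJbr.mp this
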